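/- Let U, V ⊆ ℝ² be transverse sets with U a simple set and V a good set, and let {V_ℓ} be the connected components of V. Then U and V_ℓ are transverse for every ℓ. Moreover, if ∂U is bounded then trivially X_{U,V} = 0 = X_{U,V_ℓ} for all ℓ; and if ∂U is unbounded then, for any simple path γ with range ∂U: the limits χ_±(γ,W) := lim_{t→±∞} 1_W(γ(t)) exist for W = V and for W = V_ℓ (every ℓ); setting χ(γ,W) = χ₊(γ,W) − χ₋(γ,W), one has χ(γ,V_ℓ) ≠ 0 for at most two values of ℓ; and χ(γ,V) = Σ_ℓ χ(γ,V_ℓ). -/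

import Mathlib

noncomputable section

/-- The lattice ℤ². -/
abbrev Z2 := ℤ × ℤ
/-- The plane ℝ². -/
abbrev R2 := ℝ × ℝ

/-- The ℓ¹ distance on the plane. -/
def d1 (x y : R2) : ℝ := |x.1 - y.1| + |x.2 - y.2|

/-- The ℓ¹ distance from a point to a set. -/
def d1S (x : R2) (S : Set R2) : ℝ := sInf (d1 x '' S)

/-- The logarithmic distance on the plane: d_l(x,y) = ln(1 + d₁(x,y)). -/
def dl (x y : R2) : ℝ := Real.log (1 + d1 x y)

/-- The logarithmic distance from a point to a set. -/
def dlS (x : R2) (S : Set R2) : ℝ := Real.log (1 + d1S x S)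

/-- The Euclidean norm on the plane. -/
def eunorm (x : R2) : ℝ := Real.sqrt (x.1 ^ 2 + x.2 ^ 2)

/-- The Euclidean distance on the plane. -/
def eudist (x y : R2) : ℝ := eunorm (x - y)

/-- The embedding of ℤ² into ℝ². -/
def emb (x : Z2) : R2 := ((x.1 : ℝ), (x.2 : ℝ))

/-- Ψ_{U,V}(x) = 1 + d₁(x,∂U) + d₁(x,∂V). -/
def Psi (U V : Set R2) (x : R2) : ℝ := 1 + d1S x (frontier U) + d1S x (frontier V)

/-- U and V are transverse: for some c ∈ (0,1), Ψ_{U,V}(x) ≥ |x|ᶜ whenever |x| ≥ 1/c. -/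
def Transverse (U V : Set R2) : Prop :=
  ∃ c : ℝ, 0 < c ∧ c < 1 ∧ ∀ x : R2, 1 / c ≤ eunorm x → eunorm x ^ c ≤ Psi U V x

/-- The operator norm of an m×m complex matrix. -/
def matNorm {m : ℕ} (M : Matrix (Fin m) (Fin m) ℂ) : ℝ :=
  ‖Matrix.toEuclideanCLM (𝕜 := ℂ) M‖

/-- The real-valued indicator function of a subset of the plane. -/
def indR (W : Set R2) (z : R2) : ℝ := Set.indicator W (fun _ => (1:ℝ)) z

/-- A simple path: continuous, injective, proper, smooth outside a closed discrete set,
with unit left and right derivatives everywhere. -/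
structure IsSimplePath (γ : ℝ → R2) : Prop where
  continuous : Continuous γ
  injective : Function.Injective γ
  proper : ∀ K : Set R2, IsCompact K → IsCompact (γ ⁻¹' K)
  smooth : ∃ S : Set ℝ, IsClosed S ∧ DiscreteTopology ↥S ∧ ContDiffOn ℝ (⊤ : ℕ∞) γ Sᶜ
  deriv_right : ∀ t : ℝ, ∃ v : R2, HasDerivWithinAt γ v (Set.Ici t) t ∧ eunorm v = 1
  deriv_left : ∀ t : ℝ, ∃ v : R2, HasDerivWithinAt γ v (Set.Iic t) t ∧ eunorm v = 1

/-- A simple loop: periodic, injective over a period, smooth outside a closed discrete set,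
with unit left and right derivatives everywhere. -/
structure IsSimpleLoop (γ : ℝ → R2) : Prop where
  continuous : Continuous γ
  periodic : ∃ T : ℝ, 0 < T ∧ Function.Periodic γ T ∧ Set.InjOn γ (Set.Ico 0 T)
  smooth : ∃ S : Set ℝ, IsClosed S ∧ DiscreteTopology ↥S ∧ ContDiffOn ℝ (⊤ : ℕ∞) γ Sᶜ
  deriv_right : ∀ t : ℝ, ∃ v : R2, HasDerivWithinAt γ v (Set.Ici t) t ∧ eunorm v = 1
  deriv_left : ∀ t : ℝ, ∃ v : R2, HasDerivWithinAt γ v (Set.Iic t) t ∧ eunorm v = 1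

/-- A simple set: open, connected, boundary the range of a simple path or loop. -/
def IsSimpleSet (A : Set R2) : Prop :=
  IsOpen A ∧ IsConnected A ∧
    ∃ γ : ℝ → R2, (IsSimplePath γ ∨ IsSimpleLoop γ) ∧ frontier A = Set.range γ

/-- The set of connected components of a subset of the plane. -/
def components (S : Set R2) : Set (Set R2) :=
  {C | ∃ x ∈ S, C = connectedComponentIn S x}

/-- A good set: open, int(A^c) has boundary ∂A, the connected components of ∂A are
well-separated ranges of simple paths or loops, and ∂A avoids ℤ². -/
def IsGoodSet (A : Set R2) : Prop :=
  IsOpen A ∧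
  frontier (interior Aᶜ) = frontier A ∧
  (∀ Γ ∈ components (frontier A),
    ∃ γ : ℝ → R2, (IsSimplePath γ ∨ IsSimpleLoop γ) ∧ Γ = Set.range γ) ∧
  (∃ ρ : ℝ, 0 < ρ ∧ ∀ Γ ∈ components (frontier A), ∀ Γ' ∈ components (frontier A),
    Γ ≠ Γ' → ∀ x ∈ Γ, ∀ y ∈ Γ', ρ ≤ eudist x y) ∧
  (∀ x : Z2, emb x ∉ frontier A)

/-- The open Euclidean disk. -/
def eball (z : R2) (r : ℝ) : Set R2 := {x | eudist x z < r}

/-- The closed curve obtained by following γ from γ(a) to γ(b) and then the circular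
arc of the circle centered at z of radius r from angle β to angle α. -/
def ellCurve (γ : ℝ → R2) (a b : ℝ) (z : R2) (r α β : ℝ) : ℝ → R2 := fun t =>
  if t ≤ 0 then γ (b * (1 + t) - a * t)
  else (z.1 + r * Real.cos ((1 - t) * β + t * α), z.2 + r * Real.sin ((1 - t) * β + t * α))

/-- L is the left of γ in the disk of center z and radius r: the disk is simply split
by γ, and L is the bounded connected component of the complement of the closed curve ℓ. -/
def LeftInDisk (γ : ℝ → R2) (z : R2) (r : ℝ) (L : Set R2) : Prop :=
  ∃ a b α β : ℝ, a < b ∧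
    γ ⁻¹' (eball z r) = Set.Ioo a b ∧
    (∃ C₁ C₂ : Set R2, C₁ ≠ C₂ ∧
      components (eball z r \ γ '' Set.Ioo a b) = {C₁, C₂}) ∧
    β < α ∧ α < β + 2 * Real.pi ∧
    γ a = (z.1 + r * Real.cos α, z.2 + r * Real.sin α) ∧
    γ b = (z.1 + r * Real.cos β, z.2 + r * Real.sin β) ∧
    L ∈ components ((ellCurve γ a b z r α β '' Set.Icc (-1) 1)ᶜ) ∧
    Bornology.IsBounded L

/-- U lies to the left of γ: for some disk centered on the range of γ and simply split
by γ, U contains the left of γ in that disk. -/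
def LiesLeftOf (U : Set R2) (γ : ℝ → R2) : Prop :=
  ∃ z ∈ Set.range γ, ∃ r : ℝ, 0 < r ∧ ∃ L : Set R2, LeftInDisk γ z r L ∧ L ⊆ U

/-- χ is the intersection number of the pair (U,V), U a simple set: 0 if ∂U is bounded;
otherwise χ₊ − χ₋ where χ_± are the limits at ±∞ of 1_V ∘ γ for a simple path γ
parametrizing ∂U with U on its left. -/
def HasIntersectionNumber (U V : Set R2) (χ : ℤ) : Prop :=
  (Bornology.IsBounded (frontier U) ∧ χ = 0) ∨
  ((¬ Bornology.IsBounded (frontier U)) ∧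
    ∃ γ : ℝ → R2, IsSimplePath γ ∧ Set.range γ = frontier U ∧ LiesLeftOf U γ ∧
      ∃ cp cm : ℝ,
        Filter.Tendsto (fun t => indR V (γ t)) Filter.atTop (nhds cp) ∧
        Filter.Tendsto (fun t => indR V (γ t)) Filter.atBot (nhds cm) ∧
        (χ : ℝ) = cp - cm)

section AuxLemmas

lemma d1_nonneg (x y : R2) : 0 ≤ d1 x y := add_nonneg (abs_nonneg _) (abs_nonneg _)

lemma d1S_nonneg (x : R2) (S : Set R2) : 0 ≤ d1S x S :=
  Real.sInf_nonneg (by rintro _ ⟨y, -, rfl⟩; exact d1_nonneg x y)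

lemma d1S_eq_zero_of_mem {x : R2} {S : Set R2} (h : x ∈ S) : d1S x S = 0 := by
  refine le_antisymm ?_ (d1S_nonneg x S)
  have h0 : d1 x x = 0 := by simp [d1]
  calc d1S x S ≤ d1 x x :=
        csInf_le ⟨0, by rintro _ ⟨y, -, rfl⟩; exact d1_nonneg x y⟩ ⟨x, h, rfl⟩
    _ = 0 := h0

lemma comp_subset {V C : Set R2} (hC : C ∈ components V) : C ⊆ V := by
  obtain ⟨x, hx, rfl⟩ := hC; exact connectedComponentIn_subset V x

lemma comp_eq_of_mem {V C : Set R2} (hC : C ∈ components V) {y : R2} (hy : y ∈ C) :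
    C = connectedComponentIn V y := by
  obtain ⟨x, hx, rfl⟩ := hC; exact connectedComponentIn_eq hy

lemma comp_isOpen {V C : Set R2} (hV : IsOpen V) (hC : C ∈ components V) : IsOpen C := by
  obtain ⟨x, hx, rfl⟩ := hC; exact hV.connectedComponentIn

lemma comp_frontier_subset {V C : Set R2} (hV : IsOpen V) (hC : C ∈ components V) :
    frontier C ⊆ frontier V := by
  have hCo : IsOpen C := comp_isOpen hV hC
  have hclV : closure C ∩ V ⊆ C := by
    intro z ⟨hzc, hzV⟩
    have hz : z ∈ connectedComponentIn V z := mem_connectedComponentIn hzV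
    obtain ⟨w, hw1, hw2⟩ := mem_closure_iff.1 hzc _ hV.connectedComponentIn hz
    have e1 : connectedComponentIn V z = connectedComponentIn V w :=
      connectedComponentIn_eq hw1
    have e2 : C = connectedComponentIn V w := comp_eq_of_mem hC hw2
    rw [e2, ← e1]; exact hz
  intro p hp
  rw [hCo.frontier_eq] at hp
  rw [hV.frontier_eq]
  exact ⟨closure_mono (comp_subset hC) hp.1, fun hpV => hp.2 (hclV ⟨hp.1, hpV⟩)⟩

lemma indR_of_mem {W : Set R2} {z : R2} (h : z ∈ W) : indR W z = 1 :=
  Set.indicator_of_mem h _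

lemma indR_of_not_mem {W : Set R2} {z : R2} (h : z ∉ W) : indR W z = 0 :=
  Set.indicator_of_notMem h _

lemma indR_const_on {W : Set R2} (hW : IsOpen W) {γ : ℝ → R2} (hγ : Continuous γ)
    {s : Set ℝ} (hs : IsPreconnected s) {t0 : ℝ} (ht0 : t0 ∈ s)
    (h : ∀ t ∈ s, γ t ∉ frontier W) : ∀ t ∈ s, indR W (γ t) = indR W (γ t0) := by
  have himg : IsPreconnected (γ '' s) := hs.image γ hγ.continuousOn
  have hsub : γ '' s ⊆ W ∪ (closure W)ᶜ := by
    rintro _ ⟨t, ht, rfl⟩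
    by_cases hc : γ t ∈ W
    · exact Or.inl hc
    · exact Or.inr fun hcl => h t ht ⟨hcl, by rwa [hW.interior_eq]⟩
  have hdisj : Disjoint W (closure W)ᶜ :=
    Set.disjoint_left.2 fun a ha hna => hna (subset_closure ha)
  by_cases h0 : γ t0 ∈ W
  · have hss : γ '' s ⊆ W :=
      himg.subset_left_of_subset_union hW isClosed_closure.isOpen_compl hdisj hsub
        ⟨γ t0, ⟨t0, ht0, rfl⟩, h0⟩
    intro t ht
    rw [indR_of_mem (hss ⟨t, ht, rfl⟩), indR_of_mem h0]
  · have h0' : γ t0 ∈ (closure W)ᶜ := (hsub ⟨t0, ht0, rfl⟩).resolve_left h0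
    have hss : γ '' s ⊆ (closure W)ᶜ :=
      himg.subset_left_of_subset_union isClosed_closure.isOpen_compl hW hdisj.symm
        (by rwa [Set.union_comm] at hsub) ⟨γ t0, ⟨t0, ht0, rfl⟩, h0'⟩
    intro t ht
    have hnot : γ t ∉ W := fun hc => hss ⟨t, ht, rfl⟩ (subset_closure hc)
    rw [indR_of_not_mem hnot, indR_of_not_mem h0]

lemma tendsto_ind_atTop {W : Set R2} (hW : IsOpen W) {γ : ℝ → R2} (hγ : Continuous γ)
    {T : ℝ} (h : ∀ t ∈ Set.Ici T, γ t ∉ frontier W) :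
    Filter.Tendsto (fun t => indR W (γ t)) Filter.atTop (nhds (indR W (γ T))) := by
  have hc := indR_const_on hW hγ isPreconnected_Ici Set.self_mem_Ici h
  refine Filter.Tendsto.congr' ?_ (tendsto_const_nhds (x := indR W (γ T)))
  filter_upwards [Filter.Ici_mem_atTop T] with t ht
  exact (hc t ht).symm

lemma tendsto_ind_atBot {W : Set R2} (hW : IsOpen W) {γ : ℝ → R2} (hγ : Continuous γ)
    {T : ℝ} (h : ∀ t ∈ Set.Iic T, γ t ∉ frontier W) :
    Filter.Tendsto (fun t => indR W (γ t)) Filter.atBot (nhds (indR W (γ T))) := by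
  have hc := indR_const_on hW hγ isPreconnected_Iic Set.self_mem_Iic h
  refine Filter.Tendsto.congr' ?_ (tendsto_const_nhds (x := indR W (γ T)))
  filter_upwards [Filter.Iic_mem_atBot T] with t ht
  exact (hc t ht).symm

end AuxLemmas

/-- Lemma 7.9, additivity of the intersection number: for U simple
and V good and transverse to U, each connected component V_ℓ of V is transverse to U;
if ∂U is unbounded then, along any simple path γ parametrizing ∂U, the limits of the
indicators of V and of each V_ℓ at ±∞ exist, the resulting numbers χ(γ,V_ℓ) vanish for
all but at most two components, and χ(γ,V) = Σ_ℓ χ(γ,V_ℓ). -/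
theorem intersection_number_additivity
    (U V : Set R2) (hUV : Transverse U V)
    (hU : IsSimpleSet U) (hV : IsGoodSet V) :
    (∀ C ∈ components V, Transverse U C) ∧
    (¬ Bornology.IsBounded (frontier U) →
      ∀ γ : ℝ → R2, IsSimplePath γ → Set.range γ = frontier U →
      ∃ χV : ℝ, ∃ χ : Set R2 → ℝ,
        (∃ cp cm : ℝ,
          Filter.Tendsto (fun t => indR V (γ t)) Filter.atTop (nhds cp) ∧
          Filter.Tendsto (fun t => indR V (γ t)) Filter.atBot (nhds cm) ∧
          χV = cp - cm) ∧
        (∀ C ∈ components V, ∃ cp cm : ℝ,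
          Filter.Tendsto (fun t => indR C (γ t)) Filter.atTop (nhds cp) ∧
          Filter.Tendsto (fun t => indR C (γ t)) Filter.atBot (nhds cm) ∧
          χ C = cp - cm) ∧
        (∃ C₁ C₂ : Set R2, ∀ C ∈ components V, χ C ≠ 0 → C = C₁ ∨ C = C₂) ∧
        χV = ∑' C : components V, χ C) := by
  classical
  obtain ⟨c, hc0, hc1, hcP⟩ := hUV
  have hVopen : IsOpen V := hV.1
  have key : ∀ C ∈ components V, ∀ x : R2, Psi U V x ≤ Psi U C x := by
    intro C hC x
    have hd : d1S x (frontier V) ≤ d1S x (frontier C) := by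
      rcases Set.eq_empty_or_nonempty (frontier C) with he | hne
      · have hclopen : IsClopen C := isClopen_iff_frontier_eq_empty.2 he
        have hCne : C.Nonempty := by
          obtain ⟨x0, hx0, rfl⟩ := hC
          exact ⟨x0, mem_connectedComponentIn hx0⟩
        have hCuniv : C = Set.univ := hclopen.eq_univ hCne
        have hVuniv : V = Set.univ := Set.eq_univ_of_univ_subset (hCuniv ▸ comp_subset hC)
        rw [he, hVuniv, frontier_univ]
      · exact csInf_le_csInf ⟨0, by rintro _ ⟨y, -, rfl⟩; exact d1_nonneg x y⟩
          (hne.image _) (Set.image_mono (comp_frontier_subset hVopen hC))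
    simp only [Psi]; linarith
  refine ⟨fun C hC => ⟨c, hc0, hc1, fun x hx => (hcP x hx).trans (key C hC x)⟩, ?_⟩
  intro _ γ hγ hrange
  set R : ℝ := max (1 / c) 2 with hRdef
  have hR2 : (2:ℝ) ≤ R := le_max_right _ _
  have heK : IsCompact {x : R2 | eunorm x ≤ R} := by
    have hcont : Continuous eunorm := Real.continuous_sqrt.comp (by fun_prop)
    refine (isCompact_closedBall (0 : R2) R).of_isClosed_subset
      (isClosed_le hcont continuous_const) ?_
    intro x hx
    have hx' : Real.sqrt (x.1 ^ 2 + x.2 ^ 2) ≤ R := hx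
    have h1 : |x.1| ≤ R := by
      rw [← Real.sqrt_sq_eq_abs]
      exact (Real.sqrt_le_sqrt (by nlinarith [sq_nonneg x.2])).trans hx'
    have h2 : |x.2| ≤ R := by
      rw [← Real.sqrt_sq_eq_abs]
      exact (Real.sqrt_le_sqrt (by nlinarith [sq_nonneg x.1])).trans hx'
    rw [Metric.mem_closedBall, Prod.dist_eq]
    exact max_le (by simpa [Real.dist_eq] using h1) (by simpa [Real.dist_eq] using h2)
  obtain ⟨M, hM⟩ := ((hγ.proper _ heK).isBounded).subset_closedBall 0
  set T : ℝ := |M| + 1 with hTdef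
  have hTpos : 0 < T := by positivity
  have hT : ∀ t : ℝ, T ≤ |t| → γ t ∉ frontier V := by
    intro t ht hfr
    have htK : ¬ eunorm (γ t) ≤ R := by
      intro hle
      have hmem : t ∈ γ ⁻¹' {x : R2 | eunorm x ≤ R} := hle
      have := hM hmem
      rw [Metric.mem_closedBall, Real.dist_eq, sub_zero] at this
      have h' : |t| ≤ |M| := this.trans (le_abs_self M)
      linarith
    have hRlt : R < eunorm (γ t) := lt_of_not_ge htK
    have hx1 : 1 / c ≤ eunorm (γ t) := (le_max_left _ _).trans hRlt.le
    have hP := hcP (γ t) hx1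
    have hU0 : d1S (γ t) (frontier U) = 0 :=
      d1S_eq_zero_of_mem (hrange ▸ Set.mem_range_self t)
    have hV0 : d1S (γ t) (frontier V) = 0 := d1S_eq_zero_of_mem hfr
    have h2R : (1:ℝ) < eunorm (γ t) := lt_of_lt_of_le one_lt_two (hR2.trans hRlt.le)
    have h1 : 1 < eunorm (γ t) ^ c :=
      (Real.one_lt_rpow_iff (zero_le_one.trans h2R.le)).2 (Or.inl ⟨h2R, hc0⟩)
    simp only [Psi, hU0, hV0] at hP
    linarith
  have hTIci : ∀ t ∈ Set.Ici T, γ t ∉ frontier V := fun t ht =>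
    hT t (ht.trans (le_abs_self t))
  have hTIic : ∀ t ∈ Set.Iic (-T), γ t ∉ frontier V := by
    intro t ht
    have ht' : t ≤ -T := ht
    exact hT t (by rw [abs_of_nonpos (by linarith)]; linarith)
  refine ⟨indR V (γ T) - indR V (γ (-T)),
    fun C => indR C (γ T) - indR C (γ (-T)), ?_, ?_, ?_, ?_⟩
  · exact ⟨indR V (γ T), indR V (γ (-T)),
      tendsto_ind_atTop hVopen hγ.continuous hTIci,
      tendsto_ind_atBot hVopen hγ.continuous hTIic, rfl⟩
  · intro C hC
    have hCo := comp_isOpen hVopen hC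
    exact ⟨indR C (γ T), indR C (γ (-T)),
      tendsto_ind_atTop hCo hγ.continuous
        (fun t ht h => hTIci t ht (comp_frontier_subset hVopen hC h)),
      tendsto_ind_atBot hCo hγ.continuous
        (fun t ht h => hTIic t ht (comp_frontier_subset hVopen hC h)), rfl⟩
  · refine ⟨connectedComponentIn V (γ T), connectedComponentIn V (γ (-T)), ?_⟩
    intro C hC hne
    by_cases ha : γ T ∈ C
    · exact Or.inl (comp_eq_of_mem hC ha)
    by_cases hb : γ (-T) ∈ C
    · exact Or.inr (comp_eq_of_mem hC hb)
    have h0 : indR C (γ T) - indR C (γ (-T)) = 0 := by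
      rw [indR_of_not_mem ha, indR_of_not_mem hb, sub_zero]
    exact absurd h0 hne
  · show indR V (γ T) - indR V (γ (-T)) =
      ∑' C : components V, (indR (C : Set R2) (γ T) - indR (C : Set R2) (γ (-T)))
    set a := γ T with hadef
    set b := γ (-T) with hbdef
    by_cases haV : a ∈ V <;> by_cases hbV : b ∈ V
    · have hCam : connectedComponentIn V a ∈ components V := ⟨a, haV, rfl⟩
      have hCbm : connectedComponentIn V b ∈ components V := ⟨b, hbV, rfl⟩
      have haCa : a ∈ connectedComponentIn V a := mem_connectedComponentIn haV
      have hbCb : b ∈ connectedComponentIn V b := mem_connectedComponentIn hbV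
      by_cases heq : connectedComponentIn V a = connectedComponentIn V b
      · have hz : ∀ C : components V, indR (C : Set R2) a - indR (C : Set R2) b = 0 := by
          rintro ⟨C, hC⟩
          by_cases ha : a ∈ C
          · have hCe : C = connectedComponentIn V a := comp_eq_of_mem hC ha
            have hb : b ∈ C := by rw [hCe, heq]; exact hbCb
            rw [indR_of_mem ha, indR_of_mem hb, sub_self]
          · have hb : b ∉ C := fun hb =>
              ha (by rw [comp_eq_of_mem hC hb, ← heq]; exact haCa)
            rw [indR_of_not_mem ha, indR_of_not_mem hb, sub_self]
        rw [tsum_congr hz, tsum_zero, indR_of_mem haV, indR_of_mem hbV, sub_self]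
      · have hbCa : b ∉ connectedComponentIn V a := fun hb => heq (connectedComponentIn_eq hb)
        have haCb : a ∉ connectedComponentIn V b := fun ha => heq (connectedComponentIn_eq ha).symm
        have hnee : (⟨connectedComponentIn V a, hCam⟩ : components V) ≠ ⟨connectedComponentIn V b, hCbm⟩ :=
          fun h => heq (congrArg Subtype.val h)
        rw [tsum_eq_sum (s := {(⟨connectedComponentIn V a, hCam⟩ : components V), ⟨connectedComponentIn V b, hCbm⟩}) ?_]
        · rw [Finset.sum_pair hnee]
          rw [indR_of_mem haCa, indR_of_not_mem hbCa, indR_of_not_mem haCb,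
            indR_of_mem hbCb, indR_of_mem haV, indR_of_mem hbV]
          ring
        · rintro ⟨C, hC⟩ hCs
          simp only [Finset.mem_insert, Finset.mem_singleton] at hCs
          push_neg at hCs
          have ha : a ∉ C := fun ha =>
            hCs.1 (Subtype.ext (comp_eq_of_mem hC ha))
          have hb : b ∉ C := fun hb =>
            hCs.2 (Subtype.ext (comp_eq_of_mem hC hb))
          rw [indR_of_not_mem ha, indR_of_not_mem hb, sub_self]
    · have hCam : connectedComponentIn V a ∈ components V := ⟨a, haV, rfl⟩
      rw [tsum_eq_single (⟨_, hCam⟩ : components V) ?_]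
      · rw [indR_of_mem (mem_connectedComponentIn haV),
          indR_of_not_mem (fun hb => hbV (connectedComponentIn_subset V a hb)),
          indR_of_mem haV, indR_of_not_mem hbV]
      · rintro ⟨C, hC⟩ hne
        have ha : a ∉ C := fun ha => hne (Subtype.ext (comp_eq_of_mem hC ha))
        have hb : b ∉ C := fun hb => hbV (comp_subset hC hb)
        rw [indR_of_not_mem ha, indR_of_not_mem hb, sub_self]
    · have hCbm : connectedComponentIn V b ∈ components V := ⟨b, hbV, rfl⟩
      rw [tsum_eq_single (⟨_, hCbm⟩ : components V) ?_]
      · rw [indR_of_mem (mem_connectedComponentIn hbV),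
          indR_of_not_mem (fun ha => haV (connectedComponentIn_subset V b ha)),
          indR_of_not_mem haV, indR_of_mem hbV]
      · rintro ⟨C, hC⟩ hne
        have hb : b ∉ C := fun hb => hne (Subtype.ext (comp_eq_of_mem hC hb))
        have ha : a ∉ C := fun ha => haV (comp_subset hC ha)
        rw [indR_of_not_mem ha, indR_of_not_mem hb, sub_self]
    · have hz : ∀ C : components V, indR (C : Set R2) a - indR (C : Set R2) b = 0 := by
        rintro ⟨C, hC⟩
        rw [indR_of_not_mem (fun ha => haV (comp_subset hC ha)),
          indR_of_not_mem (fun hb => hbV (comp_subset hC hb)), sub_self]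
      rw [tsum_congr hz, tsum_zero, indR_of_not_mem haV, indR_of_not_mem hbV, sub_self]

end
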